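/- Let p in (0,1], tau in (0,1), and R ~ Beta(1/p, 1). Then the integral from 0 to tau of -(1/p) r^{1/p-1} ln(1-r) dr is at most -tau^{1/p} ln(1 - tau). Consequently E[-ln(1-R) * 1_{R >= tau}] >= H_{1/p} + tau^{1/p} ln(1 - tau). -/

import Mathlib

open MeasureTheory Real
open scoped ENNReal NNReal

/-- Adaptive-skip score bound: for `p ∈ (0,1]`, `τ ∈ (0,1)` and `R ~ Beta(1/p, 1)`,
`∫₀^τ -(1/p) r^(1/p-1) log(1-r) dr ≤ -τ^(1/p) log(1-τ)`, hence
`E[-log(1-R) · 1_{R ≥ τ}] ≥ H_{1/p} + τ^(1/p) log(1-τ)`. -/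
theorem adaptive_skip_retained_score_bound
    (p τ : ℝ) (hp : p ∈ Set.Ioc (0 : ℝ) 1) (hτ : τ ∈ Set.Ioo (0 : ℝ) 1) :
    (∫ r in Set.Ioo (0 : ℝ) τ, -((1 / p) * r ^ (1 / p - 1) * Real.log (1 - r)) ≤
      -(τ ^ (1 / p)) * Real.log (1 - τ)) ∧
    (∫ r in Set.Ico τ 1, (1 / p) * r ^ (1 / p - 1) * (-Real.log (1 - r)) ≥
      (∑' n : ℕ, (1 / (n + 1 : ℝ) - 1 / ((n + 1 : ℝ) + 1 / p))) +
        τ ^ (1 / p) * Real.log (1 - τ)) := by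
  obtain ⟨hp0, hp1⟩ := hp
  obtain ⟨hτ0, hτ1⟩ := hτ
  set a : ℝ := 1 / p with ha
  have ha1 : 1 ≤ a := by rw [ha, le_div_iff₀ hp0]; linarith
  have ha0 : 0 < a := lt_of_lt_of_le one_pos ha1
  set f : ℝ → ℝ := fun r => a * r ^ (a - 1) * (-Real.log (1 - r)) with hfdef
  set g : ℕ → ℝ → ℝ := fun n r => a * r ^ (a - 1) * (r ^ (n + 1) / (n + 1)) with hgdef
  set c : ℕ → ℝ := fun n => 1 / (n + 1 : ℝ) - 1 / ((n + 1 : ℝ) + a) with hcdef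
  have hmrpow : Measurable (fun r : ℝ => r ^ (a - 1)) :=
    (Real.continuous_rpow_const (by linarith)).measurable
  -- measurability
  have hmf : Measurable f := by
    apply Measurable.mul
    · exact measurable_const.mul hmrpow
    · exact (Real.measurable_log.comp (measurable_const.sub measurable_id)).neg
  have hmg : ∀ n, Measurable (g n) := by
    intro n
    apply Measurable.mul
    · exact measurable_const.mul hmrpow
    · exact (measurable_id.pow_const _).div_const _
  -- pointwise sum
  have hsum : ∀ r ∈ Set.Ioo (0 : ℝ) 1, HasSum (fun n => g n r) (f r) := by
    intro r hr
    have h1 : |r| < 1 := by rw [abs_of_pos hr.1]; exact hr.2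
    have := (hasSum_pow_div_log_of_abs_lt_one h1).mul_left (a * r ^ (a - 1))
    simpa [hgdef, hfdef] using this
  -- bounds on g
  have hgles : ∀ n, ∀ r ∈ Set.Ioo (0 : ℝ) 1, 0 ≤ g n r ∧ g n r ≤ a := by
    intro n r hr
    have h1 : (0:ℝ) ≤ r ^ (a - 1) := Real.rpow_nonneg hr.1.le _
    have h2 : r ^ (a - 1) ≤ 1 := Real.rpow_le_one hr.1.le hr.2.le (by linarith)
    have h3 : (0:ℝ) ≤ r ^ (n + 1) := pow_nonneg hr.1.le _
    have h4 : r ^ (n + 1) ≤ 1 := pow_le_one₀ hr.1.le hr.2.le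
    have h5 : (1:ℝ) ≤ (n:ℝ) + 1 := by have := n.cast_nonneg (α := ℝ); linarith
    have hB0 : (0:ℝ) ≤ r ^ (n + 1) / ((n:ℝ) + 1) := by positivity
    have hB1 : r ^ (n + 1) / ((n:ℝ) + 1) ≤ 1 := by
      rw [div_le_one (by positivity)]; exact h4.trans h5
    constructor
    · show 0 ≤ a * r ^ (a - 1) * (r ^ (n + 1) / ((n:ℝ) + 1))
      positivity
    · show a * r ^ (a - 1) * (r ^ (n + 1) / ((n:ℝ) + 1)) ≤ a
      calc a * r ^ (a - 1) * (r ^ (n + 1) / ((n:ℝ) + 1)) ≤ a * 1 * 1 := by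
            apply mul_le_mul (mul_le_mul le_rfl h2 h1 ha0.le) hB1 hB0 (by linarith)
        _ = a := by ring
  have hgint : ∀ n, IntegrableOn (g n) (Set.Ioo (0:ℝ) 1) := by
    intro n
    apply Integrable.mono' (g := fun _ => a)
      (integrableOn_const measure_Ioo_lt_top.ne) (hmg n).aestronglyMeasurable
    filter_upwards [ae_restrict_mem measurableSet_Ioo] with r hr
    rw [Real.norm_eq_abs, abs_of_nonneg (hgles n r hr).1]
    exact (hgles n r hr).2
  -- value of each integral
  have hgval : ∀ n : ℕ, ∫ r in Set.Ioo (0:ℝ) 1, g n r = c n := by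
    intro n
    have h2 : (0:ℝ) < (n:ℝ) + 1 := by positivity
    have h3 : (0:ℝ) < (n:ℝ) + 1 + a := by linarith
    have h1 : Set.EqOn (g n) (fun r => a / (↑n + 1) * r ^ (a + n)) (Set.Ioo (0:ℝ) 1) := by
      intro r hr
      have e1 : r ^ (a - 1) * r ^ ((n:ℝ) + 1) = r ^ (a + n) := by
        rw [← Real.rpow_add hr.1]; ring_nf
      have e2 : (r : ℝ) ^ (n + 1) = r ^ ((n:ℝ) + 1) := by
        rw [← Real.rpow_natCast r (n + 1)]; push_cast; ring_nf
      show a * r ^ (a - 1) * (r ^ (n + 1) / ((n:ℝ) + 1)) = a / (↑n + 1) * r ^ (a + n)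
      rw [e2, ← e1]; ring
    rw [setIntegral_congr_fun measurableSet_Ioo h1,
      ← integral_Ioc_eq_integral_Ioo,
      ← intervalIntegral.integral_of_le (by norm_num : (0:ℝ) ≤ 1),
      intervalIntegral.integral_const_mul,
      integral_rpow (Or.inl (by have := n.cast_nonneg (α := ℝ); linarith))]
    have h4 : a + (n:ℝ) + 1 ≠ 0 := by
      have := n.cast_nonneg (α := ℝ); intro h; nlinarith
    rw [Real.one_rpow, Real.zero_rpow h4]
    show a / (↑n + 1) * ((1 - 0) / (a + ↑n + 1)) = 1 / ((n:ℝ) + 1) - 1 / ((n:ℝ) + 1 + a)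
    rw [div_sub_div _ _ h2.ne' h3.ne', div_mul_div_comm,
      div_eq_div_iff (by positivity) (by positivity)]
    ring
  have hc_nonneg : ∀ n, 0 ≤ c n := by
    intro n
    have h2 : (0:ℝ) < (n:ℝ) + 1 := by positivity
    show 0 ≤ 1 / ((n:ℝ) + 1) - 1 / ((n:ℝ) + 1 + a)
    rw [sub_nonneg]
    exact one_div_le_one_div_of_le h2 (by linarith)
  have hcsum : Summable c := by
    have hbase : Summable (fun n : ℕ => 1 / ((n:ℝ)) ^ 2) :=
      Real.summable_one_div_nat_pow.2 one_lt_two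
    have hshift : Summable (fun n : ℕ => a * (1 / ((n:ℝ) + 1) ^ 2)) := by
      apply Summable.mul_left
      have := (summable_nat_add_iff 1).2 hbase
      simpa using this
    apply Summable.of_nonneg_of_le hc_nonneg _ hshift
    intro n
    have h2 : (0:ℝ) < (n:ℝ) + 1 := by positivity
    have h3 : (0:ℝ) < (n:ℝ) + 1 + a := by linarith
    have key : c n = a / (((n:ℝ) + 1) * ((n:ℝ) + 1 + a)) := by
      show 1 / ((n:ℝ) + 1) - 1 / ((n:ℝ) + 1 + a) = _
      rw [div_sub_div _ _ h2.ne' h3.ne']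
      congr 1
      ring
    rw [key, mul_one_div]
    apply div_le_div_of_nonneg_left ha0.le (by positivity)
    nlinarith
  -- lintegrals
  have hgl : ∀ n, ∫⁻ r in Set.Ioo (0:ℝ) 1, ENNReal.ofReal (g n r) = ENNReal.ofReal (c n) := by
    intro n
    rw [← ofReal_integral_eq_lintegral_ofReal (hgint n) ?_, hgval n]
    filter_upwards [ae_restrict_mem measurableSet_Ioo] with r hr using (hgles n r hr).1
  have hfnn : ∀ r ∈ Set.Ioo (0:ℝ) 1, 0 ≤ f r := by
    intro r hr
    have h1 : Real.log (1 - r) ≤ 0 := Real.log_nonpos (by linarith [hr.2]) (by linarith [hr.1])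
    have h2 : (0:ℝ) ≤ r ^ (a - 1) := Real.rpow_nonneg hr.1.le _
    have h3 : 0 ≤ -Real.log (1 - r) := by linarith
    show 0 ≤ a * r ^ (a - 1) * (-Real.log (1 - r))
    positivity
  have hfl : (∫⁻ r in Set.Ioo (0:ℝ) 1, ‖f r‖₊) = ENNReal.ofReal (∑' n, c n) := by
    have e1 : ∀ r ∈ Set.Ioo (0:ℝ) 1, (‖f r‖₊ : ℝ≥0∞) = ∑' n, ENNReal.ofReal (g n r) := by
      intro r hr
      have hs := hsum r hr
      rw [← ENNReal.ofReal_tsum_of_nonneg (fun n => (hgles n r hr).1) hs.summable, hs.tsum_eq]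
      exact Real.enorm_eq_ofReal (hfnn r hr)
    have hlt := lintegral_tsum (μ := volume.restrict (Set.Ioo (0:ℝ) 1))
      (f := fun n r => ENNReal.ofReal (g n r))
      (fun n => ((hmg n).ennreal_ofReal).aemeasurable)
    rw [setLIntegral_congr_fun measurableSet_Ioo e1, hlt,
      ENNReal.ofReal_tsum_of_nonneg hc_nonneg hcsum]
    exact tsum_congr hgl
  have hfint : IntegrableOn f (Set.Ioo (0:ℝ) 1) := by
    refine ⟨hmf.aestronglyMeasurable, ?_⟩
    show (∫⁻ r in Set.Ioo (0:ℝ) 1, ‖f r‖₊) < ⊤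
    rw [hfl]; exact ENNReal.ofReal_lt_top
  -- total integral equals the series
  have hftot : ∫ r in Set.Ioo (0:ℝ) 1, f r = ∑' n, c n := by
    have e2 : ∫ r in Set.Ioo (0:ℝ) 1, f r = ∫ r in Set.Ioo (0:ℝ) 1, ∑' n, g n r :=
      setIntegral_congr_fun measurableSet_Ioo (fun r hr => ((hsum r hr).tsum_eq).symm)
    rw [e2, integral_tsum (fun n => (hmg n).aestronglyMeasurable) ?_]
    · exact tsum_congr hgval
    · have e3 : ∀ n, (∫⁻ r in Set.Ioo (0:ℝ) 1, ‖g n r‖ₑ) = ENNReal.ofReal (c n) := by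
        intro n
        rw [← hgl n]
        exact setLIntegral_congr_fun measurableSet_Ioo
          (fun r hr => Real.enorm_eq_ofReal (hgles n r hr).1)
      rw [tsum_congr e3, ← ENNReal.ofReal_tsum_of_nonneg hc_nonneg hcsum]
      exact ENNReal.ofReal_ne_top
  -- part 1
  have hIτ : Set.Ioo (0:ℝ) τ ⊆ Set.Ioo (0:ℝ) 1 := Set.Ioo_subset_Ioo le_rfl hτ1.le
  have hfintτ : IntegrableOn f (Set.Ioo (0:ℝ) τ) := hfint.mono_set hIτ
  have hdint : IntegrableOn (fun r => a * r ^ (a - 1) * (-Real.log (1 - τ)))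
      (Set.Ioo (0:ℝ) τ) := by
    have h1 : IntervalIntegrable (fun r : ℝ => r ^ (a - 1)) volume 0 τ :=
      intervalIntegral.intervalIntegrable_rpow' (by linarith)
    have h2 := (h1.const_mul a).mul_const (-Real.log (1 - τ))
    rw [intervalIntegrable_iff_integrableOn_Ioc_of_le hτ0.le] at h2
    exact h2.mono_set Set.Ioo_subset_Ioc_self
  have part1 : ∫ r in Set.Ioo (0:ℝ) τ, f r ≤ τ ^ a * (-Real.log (1 - τ)) := by
    have hmono : ∀ r ∈ Set.Ioo (0:ℝ) τ, f r ≤ a * r ^ (a - 1) * (-Real.log (1 - τ)) := by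
      intro r hr
      have h1 : Real.log (1 - τ) ≤ Real.log (1 - r) :=
        Real.log_le_log (by linarith) (by linarith [hr.2])
      have h2 : (0:ℝ) ≤ a * r ^ (a - 1) := by
        have := Real.rpow_nonneg hr.1.le (a - 1); positivity
      show a * r ^ (a - 1) * (-Real.log (1 - r)) ≤ a * r ^ (a - 1) * (-Real.log (1 - τ))
      apply mul_le_mul_of_nonneg_left (by linarith) h2
    have hle := setIntegral_mono_on hfintτ hdint measurableSet_Ioo hmono
    have hval : ∫ r in Set.Ioo (0:ℝ) τ, a * r ^ (a - 1) * (-Real.log (1 - τ))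
        = τ ^ a * (-Real.log (1 - τ)) := by
      rw [← integral_Ioc_eq_integral_Ioo, ← intervalIntegral.integral_of_le hτ0.le]
      have e : (fun r : ℝ => a * r ^ (a - 1) * (-Real.log (1 - τ)))
          = fun r : ℝ => (a * r ^ (a - 1)) * (-Real.log (1 - τ)) := rfl
      rw [e, intervalIntegral.integral_mul_const, intervalIntegral.integral_const_mul,
        integral_rpow (Or.inl (by linarith))]
      have e2 : a - 1 + 1 = a := by ring
      rw [e2, Real.zero_rpow (ne_of_gt ha0)]
      have hpne : p ≠ 0 := ne_of_gt hp0
      field_simp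
      ring
    rw [hval] at hle
    exact hle
  -- split
  have hdisj : Disjoint (Set.Ioo (0:ℝ) τ) (Set.Ico τ 1) := by
    rw [Set.disjoint_left]
    rintro x ⟨_, h2⟩ ⟨h3, _⟩
    exact absurd h3 (not_le.2 h2)
  have hIco : Set.Ico τ 1 ⊆ Set.Ioo (0:ℝ) 1 := fun x hx => ⟨lt_of_lt_of_le hτ0 hx.1, hx.2⟩
  have hsplit : ∫ r in Set.Ioo (0:ℝ) 1, f r
      = (∫ r in Set.Ioo (0:ℝ) τ, f r) + ∫ r in Set.Ico τ 1, f r := by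
    rw [← Set.Ioo_union_Ico_eq_Ioo hτ0 hτ1.le]
    exact setIntegral_union hdisj measurableSet_Ico hfintτ (hfint.mono_set hIco)
  constructor
  · have hfeq : ∀ r : ℝ, -(a * r ^ (a - 1) * Real.log (1 - r)) = f r := by
      intro r
      show _ = a * r ^ (a - 1) * (-Real.log (1 - r))
      ring
    simp only [hfeq]
    have e : -(τ ^ a) * Real.log (1 - τ) = τ ^ a * (-Real.log (1 - τ)) := by ring
    rw [e]
    exact part1
  · rw [ge_iff_le]
    have h1 : ∑' n, c n = (∫ r in Set.Ioo (0:ℝ) τ, f r) + ∫ r in Set.Ico τ 1, f r := by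
      rw [← hftot, hsplit]
    have h2 : τ ^ a * Real.log (1 - τ) = -(τ ^ a * (-Real.log (1 - τ))) := by ring
    linarith [part1]
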